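/- Let α_1 ⊊ α_2 ⊊ … ⊊ α_N be a nested family of subsets of {1,…,n} with |α_1| = k_1 and |α_N| = k_N, and suppose every α_t is stable for the n×n real matrix W. Then the number of pairs (i,j) with w_{ij} > 0 is at least k_N, and the number of pairs (i,j) with w_{ij} < 0 is at least n − k_1. -/

import Mathlib

open Finset

/-- Signature of a set: `+1` on `α`, `-1` off `α`. -/
def sgn {n : ℕ} (α : Finset (Fin n)) (i : Fin n) : ℝ := if i ∈ α then 1 else -1

/-- `α` is a stable set for the weight matrix `W`. -/
def IsStable {n : ℕ} (W : Matrix (Fin n) (Fin n) ℝ) (α : Finset (Fin n)) : Prop :=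
  ∀ i, 0 < sgn α i * ∑ j ∈ α, W i j

/-- If a strictly nested family `A 0 ⊊ … ⊊ A N` is stable for `W`, then `W` has at
least `|A N|` positive entries and at least `n - |A 0|` negative entries. -/
theorem stmt7 (n N : ℕ) (W : Matrix (Fin n) (Fin n) ℝ)
    (A : Fin (N + 1) → Finset (Fin n)) (hA : StrictMono A)
    (hstab : ∀ t, IsStable W (A t)) :
    (A (Fin.last N)).card ≤
        ((Finset.univ : Finset (Fin n × Fin n)).filter fun p => 0 < W p.1 p.2).card ∧
    n - (A 0).card ≤
        ((Finset.univ : Finset (Fin n × Fin n)).filter fun p => W p.1 p.2 < 0).card := by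
  constructor
  · have key : ∀ i : Fin n, ∃ j, i ∈ A (Fin.last N) → 0 < W i j := by
      intro i
      by_cases hi : i ∈ A (Fin.last N)
      · have h := hstab (Fin.last N) i
        rw [sgn, if_pos hi, one_mul] at h
        by_contra hc
        push_neg at hc
        exact absurd h (not_lt.2 (Finset.sum_nonpos fun j _ => (hc j).2))
      · exact ⟨i, fun h => absurd h hi⟩
    choose f hf using key
    apply Finset.card_le_card_of_injOn (fun i => (i, f i))
    · intro i hi
      simp only [Finset.mem_coe, Finset.mem_filter, Finset.mem_univ, true_and]
      exact hf i hi
    · intro a _ b _ h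
      exact (Prod.mk.injEq _ _ _ _ ▸ h).1
  · have key : ∀ i : Fin n, ∃ j, i ∉ A 0 → W i j < 0 := by
      intro i
      by_cases hi : i ∈ A 0
      · exact ⟨i, fun h => absurd hi h⟩
      · have h := hstab 0 i
        rw [sgn, if_neg hi, neg_one_mul, neg_pos] at h
        by_contra hc
        push_neg at hc
        exact absurd h (not_lt.2 (Finset.sum_nonneg fun j _ => (hc j).2))
    choose f hf using key
    have hcompl : ((A 0)ᶜ : Finset (Fin n)).card = n - (A 0).card := by
      rw [Finset.card_compl, Fintype.card_fin]
    rw [← hcompl]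
    apply Finset.card_le_card_of_injOn (fun i => (i, f i))
    · intro i hi
      simp only [Finset.mem_coe, Finset.mem_filter, Finset.mem_univ, true_and]
      exact hf i (Finset.mem_compl.1 hi)
    · intro a _ b _ h
      exact (Prod.mk.injEq _ _ _ _ ▸ h).1
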